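/- arXiv:1902.11136 — 2 statements merged into one kernel-verified Lean document; each statement's English description precedes it below -/
import Mathlib

section
/- Adjoint State Equation (Theorem 1). Suppose that for every parameter θ the trajectory X^θ satisfies the forward state equation d/dt X^θ_t = F_θ(X^θ_t) on [0,T] with initial condition X^θ_0 = g(θ), and that (θ,t) ↦ X^θ_t is twice continuously differentiable. Let λ : [0,T] → ℝⁿ be the solution, solved backward from the final condition λ_T = 0, of the adjoint equation d/dt λ_t = A_t λ_t + B_t, where A_t = −(∂_X F_θ(X^θ_t))* is the negative adjoint (transpose) of the Jacobian of F_θ at X^θ_t and B_t = 2 (∂_X H(X^θ_t))*(H(X^θ_t) − Y_t). Then the derivative of the cost J(θ) = ∫₀ᵀ ‖Y_t − H(X^θ_t)‖² dt with respect to θ, applied to any direction δθ ∈ ℝᵖ, equals −∫₀ᵀ ⟨λ_t, (∂_θ F_θ(X^θ_t))·δθ⟩ dt − ⟨λ_0, (∂_θ g(θ))·δθ⟩. -/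
open Set MeasureTheory intervalIntegral ContinuousLinearMap

set_option maxHeartbeats 1000000 in
/-- **Adjoint State Equation (Theorem 1).**
If for every parameter `θ` the trajectory `X θ` satisfies the forward state equation
`d/dt X θ t = F θ (X θ t)` on `[0,T]` with initial condition `X θ 0 = g θ`, and `λ` solves
the adjoint equation `d/dt λ t = A t (λ t) + B t` backwards from `λ T = 0`, with
`A t = -(∂_X F_θ(X^θ_t))*` and `B t = 2 (∂_X H(X^θ_t))*(H(X^θ_t) - Y t)`, then the derivative
of the cost `J(θ) = ∫₀ᵀ ‖Y t - H (X θ t)‖² dt` in any direction `δθ` equals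
`-∫₀ᵀ ⟨λ t, (∂_θ F_θ(X^θ_t)) δθ⟩ dt - ⟨λ 0, (∂_θ g θ) δθ⟩`. -/
theorem adjoint_state_equation
    (p n k : ℕ) (T : ℝ) (hT : 0 < T)
    (X : EuclideanSpace ℝ (Fin p) → ℝ → EuclideanSpace ℝ (Fin n))
    (F : EuclideanSpace ℝ (Fin p) → EuclideanSpace ℝ (Fin n) → EuclideanSpace ℝ (Fin n))
    (g : EuclideanSpace ℝ (Fin p) → EuclideanSpace ℝ (Fin n))
    (H : EuclideanSpace ℝ (Fin n) → EuclideanSpace ℝ (Fin k))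
    (Y : ℝ → EuclideanSpace ℝ (Fin k))
    (hX : ContDiff ℝ 2 (fun q : EuclideanSpace ℝ (Fin p) × ℝ => X q.1 q.2))
    (hF : ContDiff ℝ 2
      (fun q : EuclideanSpace ℝ (Fin p) × EuclideanSpace ℝ (Fin n) => F q.1 q.2))
    (hg : ContDiff ℝ 1 g) (hH : ContDiff ℝ 1 H) (hY : Continuous Y)
    (hforward : ∀ θ, ∀ t ∈ Set.Icc (0 : ℝ) T,
      HasDerivAt (fun s => X θ s) (F θ (X θ t)) t)
    (hinit : ∀ θ, X θ 0 = g θ)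
    (θ : EuclideanSpace ℝ (Fin p))
    (lam : ℝ → EuclideanSpace ℝ (Fin n))
    (hlamT : lam T = 0)
    (hlam : ∀ t ∈ Set.Icc (0 : ℝ) T,
      HasDerivAt lam
        ((-(ContinuousLinearMap.adjoint (fderiv ℝ (F θ) (X θ t)))) (lam t)
          + (2 : ℝ) •
            (ContinuousLinearMap.adjoint (fderiv ℝ H (X θ t))) (H (X θ t) - Y t)) t) :
    DifferentiableAt ℝ (fun θ' => ∫ t in (0 : ℝ)..T, ‖Y t - H (X θ' t)‖ ^ 2) θ ∧
    ∀ δθ : EuclideanSpace ℝ (Fin p),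
      fderiv ℝ (fun θ' => ∫ t in (0 : ℝ)..T, ‖Y t - H (X θ' t)‖ ^ 2) θ δθ =
        -(∫ t in (0 : ℝ)..T,
            (inner ℝ (lam t) (fderiv ℝ (fun θ' => F θ' (X θ t)) θ δθ) : ℝ))
          - (inner ℝ (lam 0) (fderiv ℝ g θ δθ) : ℝ) := by
  have h0T : (0:ℝ) ≤ T := hT.le
  set G : EuclideanSpace ℝ (Fin p) × ℝ → EuclideanSpace ℝ (Fin n) :=
    fun q => X q.1 q.2 with hGdef
  set Fu : EuclideanSpace ℝ (Fin p) × EuclideanSpace ℝ (Fin n) → EuclideanSpace ℝ (Fin n) :=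
    fun q => F q.1 q.2 with hFudef
  have hG : ContDiff ℝ 2 G := hX
  have hGd : Differentiable ℝ G := hG.differentiable two_ne_zero
  have hDGc : Continuous (fderiv ℝ G) := hG.continuous_fderiv two_ne_zero
  have hDG1 : ContDiff ℝ 1 (fderiv ℝ G) := hG.fderiv_right (by norm_num)
  have hFd : Differentiable ℝ Fu := hF.differentiable two_ne_zero
  have hHd : Differentiable ℝ H := hH.differentiable one_ne_zero
  have hXc : Continuous fun q : EuclideanSpace ℝ (Fin p) × ℝ => X q.1 q.2 := hG.continuous
  -- partial derivative in θ of X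
  set P : EuclideanSpace ℝ (Fin p) → ℝ → (EuclideanSpace ℝ (Fin p) →L[ℝ] EuclideanSpace ℝ (Fin n)) :=
    fun x t => (fderiv ℝ G (x, t)).comp (ContinuousLinearMap.inl ℝ _ ℝ) with hPdef
  have hP : ∀ x t, HasFDerivAt (fun x' => X x' t) (P x t) x := by
    intro x t
    have h1 : HasFDerivAt (fun x' : EuclideanSpace ℝ (Fin p) => (x', t))
        (ContinuousLinearMap.inl ℝ _ ℝ) x := (hasFDerivAt_id x).prodMk (hasFDerivAt_const t x)
    exact (hGd (x, t)).hasFDerivAt.comp x h1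
  -- time partial equals F on the strip
  have hTime : ∀ (x) (t), t ∈ Set.Icc (0:ℝ) T →
      fderiv ℝ G (x, t) (0, 1) = F x (X x t) := by
    intro x t ht
    have h1 : HasFDerivAt (fun s : ℝ => ((x : EuclideanSpace ℝ (Fin p)), s))
        (ContinuousLinearMap.inr ℝ _ ℝ) t := (hasFDerivAt_const x t).prodMk (hasFDerivAt_id t)
    have h2 : HasFDerivAt (fun s => X x s)
        ((fderiv ℝ G (x, t)).comp (ContinuousLinearMap.inr ℝ _ ℝ)) t :=
      (hGd (x, t)).hasFDerivAt.comp t h1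
    have h3 := (hforward x t ht).hasFDerivAt
    have h4 := h2.unique h3
    have : ((fderiv ℝ G (x, t)).comp (ContinuousLinearMap.inr ℝ _ ℝ)) 1
        = ((1 : ℝ →L[ℝ] ℝ).smulRight (F x (X x t))) 1 := by rw [h4]; simp
    simpa using this
  -- derivative of the integrand in θ
  set D : EuclideanSpace ℝ (Fin p) → ℝ → (EuclideanSpace ℝ (Fin p) →L[ℝ] ℝ) :=
    fun x t => (-(2:ℝ)) • ((innerSL ℝ (Y t - H (X x t))).comp
      ((fderiv ℝ H (X x t)).comp (P x t))) with hDdef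
  have hA : ∀ x t, HasFDerivAt (fun x' => ‖Y t - H (X x' t)‖ ^ 2) (D x t) x := by
    intro x t
    have hu : HasFDerivAt (fun x' => Y t - H (X x' t))
        (-((fderiv ℝ H (X x t)).comp (P x t))) x := by
      have h1 := (hHd (X x t)).hasFDerivAt.comp x (hP x t)
      have h2 := (hasFDerivAt_const (Y t) x).sub h1
      rw [zero_sub] at h2
      exact h2
    have hin := hu.inner ℝ hu
    have hfun : (fun x' => ‖Y t - H (X x' t)‖ ^ 2)
        = fun x' => (inner ℝ (Y t - H (X x' t)) (Y t - H (X x' t)) : ℝ) := by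
      funext x'; exact (real_inner_self_eq_norm_sq _).symm
    rw [hfun]
    refine hin.congr_fderiv ?_
    ext δ
    simp only [hDdef, ContinuousLinearMap.coe_smul', Pi.smul_apply,
      ContinuousLinearMap.coe_comp', Function.comp_apply, innerSL_apply_apply,
      fderivInnerCLM_apply, ContinuousLinearMap.prod_apply,
      ContinuousLinearMap.neg_apply, inner_neg_right, inner_neg_left,
      smul_eq_mul, real_inner_comm]
    ring
  -- continuity of D jointly
  have hDc : Continuous (fun q : EuclideanSpace ℝ (Fin p) × ℝ => D q.1 q.2) := by
    have hXq : Continuous fun q : EuclideanSpace ℝ (Fin p) × ℝ => X q.1 q.2 := hXc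
    have hPc : Continuous fun q : EuclideanSpace ℝ (Fin p) × ℝ => P q.1 q.2 := by
      have h1 : Continuous fun q : EuclideanSpace ℝ (Fin p) × ℝ => fderiv ℝ G (q.1, q.2) := by
        simpa using hDGc
      exact h1.clm_comp continuous_const
    have hHX : Continuous fun q : EuclideanSpace ℝ (Fin p) × ℝ => fderiv ℝ H (X q.1 q.2) :=
      (hH.continuous_fderiv one_ne_zero).comp hXq
    have hiSL : Continuous fun q : EuclideanSpace ℝ (Fin p) × ℝ =>
        innerSL ℝ (Y q.2 - H (X q.1 q.2)) :=
      (innerSL ℝ).continuous.comp ((hY.comp continuous_snd).sub (hH.continuous.comp hXq))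
    exact (hiSL.clm_comp (hHX.clm_comp hPc)).const_smul (-(2:ℝ))
  -- uniform bound on a compact neighborhood
  obtain ⟨C, hC⟩ : ∃ C, ∀ q ∈ (Metric.closedBall θ 1 ×ˢ Set.Icc (0:ℝ) T),
      ‖D q.1 q.2‖ ≤ C :=
    ((isCompact_closedBall θ 1).prod isCompact_Icc).exists_bound_of_continuousOn
      hDc.continuousOn
  -- differentiation under the integral sign
  have hcont_t : ∀ x : EuclideanSpace ℝ (Fin p),
      Continuous fun t => ‖Y t - H (X x t)‖ ^ 2 := by
    intro x
    have : Continuous fun t => X x t := hXc.comp (continuous_const.prodMk continuous_id)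
    exact ((hY.sub (hH.continuous.comp this)).norm.pow 2)
  have hDθt : Continuous fun t => D θ t := by
    have heq : (fun t => D θ t) = (fun q : EuclideanSpace ℝ (Fin p) × ℝ => D q.1 q.2) ∘ (fun t : ℝ => (θ, t)) := rfl
    rw [heq]
    exact hDc.comp (continuous_const.prodMk continuous_id)
  have hJ : HasFDerivAt (fun θ' => ∫ t in (0:ℝ)..T, ‖Y t - H (X θ' t)‖ ^ 2)
      (∫ t in (0:ℝ)..T, D θ t) θ := by
    apply intervalIntegral.hasFDerivAt_integral_of_dominated_of_fderiv_le
      (s := Metric.ball θ 1) (bound := fun _ => C) (Metric.ball_mem_nhds θ one_pos)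
    · exact Filter.Eventually.of_forall fun x => ((hcont_t x).aestronglyMeasurable).restrict
    · exact (hcont_t θ).intervalIntegrable 0 T
    · exact (hDθt.aestronglyMeasurable).restrict
    · refine Filter.Eventually.of_forall fun t ht x hx => ?_
      refine hC (x, t) ⟨Metric.ball_subset_closedBall hx, ?_⟩
      rw [Set.uIoc_of_le h0T] at ht
      exact Set.Ioc_subset_Icc_self ht
    · exact intervalIntegrable_const
    · exact Filter.Eventually.of_forall fun t _ x _ => hA x t
  -- partial/full derivative relations for F
  have hpart1 : ∀ (y : EuclideanSpace ℝ (Fin n)) (v : EuclideanSpace ℝ (Fin p)),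
      fderiv ℝ (fun θ' => F θ' y) θ v = fderiv ℝ Fu (θ, y) (v, 0) := by
    intro y v
    have h1 : HasFDerivAt (fun θ' : EuclideanSpace ℝ (Fin p) => (θ', y))
        (ContinuousLinearMap.inl ℝ _ _) θ := (hasFDerivAt_id θ).prodMk (hasFDerivAt_const y θ)
    have h2 : HasFDerivAt (fun θ' => F θ' y)
        ((fderiv ℝ Fu (θ, y)).comp (ContinuousLinearMap.inl ℝ _ _)) θ :=
      by have := (hFd (θ, y)).hasFDerivAt.comp θ h1; exact this
    rw [h2.fderiv]; simp
  have hpart2 : ∀ (y : EuclideanSpace ℝ (Fin n)) (v : EuclideanSpace ℝ (Fin n)),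
      fderiv ℝ (F θ) y v = fderiv ℝ Fu (θ, y) (0, v) := by
    intro y v
    have h1 : HasFDerivAt (fun z : EuclideanSpace ℝ (Fin n) => (θ, z))
        (ContinuousLinearMap.inr ℝ _ _) y := (hasFDerivAt_const θ y).prodMk (hasFDerivAt_id y)
    have h2 : HasFDerivAt (F θ)
        ((fderiv ℝ Fu (θ, y)).comp (ContinuousLinearMap.inr ℝ _ _)) y :=
      (hFd (θ, y)).hasFDerivAt.comp y h1
    rw [h2.fderiv]; simp
  have hlamCont : ContinuousOn lam (Set.Icc 0 T) :=
    fun s hs => ((hlam s hs).continuousAt).continuousWithinAt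
  refine ⟨hJ.differentiableAt, fun δθ => ?_⟩
  rw [hJ.fderiv]
  simp only [hpart1]
  -- the variation of the state
  set δX : ℝ → EuclideanSpace ℝ (Fin n) := fun t => fderiv ℝ G (θ, t) (δθ, 0) with hδXdef
  set Bv : ℝ → EuclideanSpace ℝ (Fin n) := fun t => fderiv ℝ Fu (θ, X θ t) (δθ, 0) with hBvdef
  have hδXc : Continuous δX := by
    have heq : (fun t : ℝ => fderiv ℝ G (θ, t)) = (fderiv ℝ G) ∘ (fun t : ℝ => (θ, t)) := rfl
    have h1 : Continuous fun t : ℝ => fderiv ℝ G (θ, t) := by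
      rw [heq]; exact hDGc.comp (continuous_const.prodMk continuous_id)
    exact h1.clm_apply continuous_const
  have hBvc : Continuous Bv := by
    have heq : (fun s : ℝ => fderiv ℝ Fu (θ, X θ s))
        = (fderiv ℝ Fu) ∘ (fun s : ℝ => (θ, X θ s)) := rfl
    have hXθ : Continuous fun s : ℝ => X θ s := by
      have heq2 : (fun s : ℝ => X θ s) = G ∘ (fun s : ℝ => (θ, s)) := rfl
      rw [heq2]; exact hG.continuous.comp (continuous_const.prodMk continuous_id)
    have h1 : Continuous fun s : ℝ => fderiv ℝ Fu (θ, X θ s) := by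
      rw [heq]
      exact (hF.continuous_fderiv two_ne_zero).comp (continuous_const.prodMk hXθ)
    exact h1.clm_apply continuous_const
  -- the variational ODE
  have key : ∀ t ∈ Set.Ioo (0:ℝ) T,
      HasDerivAt δX (fderiv ℝ Fu (θ, X θ t) (0, δX t) + Bv t) t := by
    intro t ht
    have hDGdiff : HasFDerivAt (fderiv ℝ G) (fderiv ℝ (fderiv ℝ G) (θ, t)) (θ, t) :=
      ((hDG1.differentiable one_ne_zero) (θ, t)).hasFDerivAt
    have hsymm := (hG.contDiffAt (x := (θ, t))).isSymmSndFDerivAt (by simp [minSmoothness_of_isRCLikeNormedField])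
    have hcurve : HasDerivAt (fun s : ℝ => ((θ : EuclideanSpace ℝ (Fin p)), s))
        ((0 : EuclideanSpace ℝ (Fin p)), (1:ℝ)) t :=
      (hasDerivAt_const t θ).prodMk (hasDerivAt_id t)
    have h1 : HasDerivAt (fun s : ℝ => fderiv ℝ G (θ, s))
        (fderiv ℝ (fderiv ℝ G) (θ, t) (0, 1)) t := hDGdiff.comp_hasDerivAt t hcurve
    have h2 : HasDerivAt δX (fderiv ℝ (fderiv ℝ G) (θ, t) (0, 1) (δθ, 0)) t := by
      have h3 := h1.clm_apply (hasDerivAt_const t ((δθ, 0) : EuclideanSpace ℝ (Fin p) × ℝ))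
      simpa using h3
    rw [hsymm (0, 1) (δθ, 0)] at h2
    -- identify the second derivative term via the forward equation
    have hWf : HasFDerivAt (fun q : EuclideanSpace ℝ (Fin p) × ℝ => fderiv ℝ G q (0, 1))
        ((ContinuousLinearMap.apply ℝ (EuclideanSpace ℝ (Fin n))
            ((0 : EuclideanSpace ℝ (Fin p)), (1:ℝ))).comp
          (fderiv ℝ (fderiv ℝ G) (θ, t))) (θ, t) := by
      have heq : (fun q : EuclideanSpace ℝ (Fin p) × ℝ => fderiv ℝ G q (0, 1))
          = ⇑(ContinuousLinearMap.apply ℝ (EuclideanSpace ℝ (Fin n))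
              ((0 : EuclideanSpace ℝ (Fin p)), (1:ℝ))) ∘ (fderiv ℝ G) := rfl
      rw [heq]
      exact (ContinuousLinearMap.apply ℝ (EuclideanSpace ℝ (Fin n))
          ((0 : EuclideanSpace ℝ (Fin p)), (1:ℝ))).hasFDerivAt.comp (θ, t) hDGdiff
    have hZf : HasFDerivAt (fun q : EuclideanSpace ℝ (Fin p) × ℝ => F q.1 (X q.1 q.2))
        ((fderiv ℝ Fu (θ, X θ t)).comp
          ((ContinuousLinearMap.fst ℝ _ _).prod (fderiv ℝ G (θ, t)))) (θ, t) := by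
      have hq : HasFDerivAt (fun q : EuclideanSpace ℝ (Fin p) × ℝ => (q.1, G q))
          ((ContinuousLinearMap.fst ℝ _ _).prod (fderiv ℝ G (θ, t))) (θ, t) :=
        (hasFDerivAt_fst).prodMk (hGd (θ, t)).hasFDerivAt
      have heq : (fun q : EuclideanSpace ℝ (Fin p) × ℝ => F q.1 (X q.1 q.2))
          = Fu ∘ (fun q : EuclideanSpace ℝ (Fin p) × ℝ => (q.1, G q)) := rfl
      rw [heq]
      exact (hFd (θ, X θ t)).hasFDerivAt.comp ((θ, t)) hq
    have hWZ : (fun q : EuclideanSpace ℝ (Fin p) × ℝ => fderiv ℝ G q (0, 1))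
        =ᶠ[nhds (θ, t)] (fun q : EuclideanSpace ℝ (Fin p) × ℝ => F q.1 (X q.1 q.2)) := by
      have hopen : IsOpen ((Set.univ : Set (EuclideanSpace ℝ (Fin p))) ×ˢ Set.Ioo (0:ℝ) T) :=
        isOpen_univ.prod isOpen_Ioo
      have hmem : (θ, t) ∈ (Set.univ : Set (EuclideanSpace ℝ (Fin p))) ×ˢ Set.Ioo (0:ℝ) T :=
        ⟨trivial, ht⟩
      filter_upwards [hopen.mem_nhds hmem] with q hq
      exact hTime q.1 q.2 (Set.Ioo_subset_Icc_self hq.2)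
    have hZf2 := hWf.congr_of_eventuallyEq hWZ.symm
    have hLL := hZf2.unique hZf
    have happ : fderiv ℝ (fderiv ℝ G) (θ, t) (δθ, 0) (0, 1)
        = fderiv ℝ Fu (θ, X θ t) (δθ, δX t) := by
      have h5 := congrFun (congrArg (fun (L : _ →L[ℝ] _) => (L : _ → _)) hLL) (δθ, 0)
      simpa using h5
    rw [happ] at h2
    have hsplit : fderiv ℝ Fu (θ, X θ t) (δθ, δX t)
        = fderiv ℝ Fu (θ, X θ t) (0, δX t) + Bv t := by
      rw [hBvdef, ← map_add]
      congr 1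
      simp [Prod.ext_iff]
    rw [hsplit] at h2
    exact h2
  -- derivative of the pairing
  have hψ : ∀ t ∈ Set.Ioo (0:ℝ) T,
      HasDerivAt (fun s => (inner ℝ (lam s) (δX s) : ℝ))
        ((inner ℝ (lam t) (Bv t) : ℝ) + D θ t δθ) t := by
    intro t ht
    have htI := Set.Ioo_subset_Icc_self ht
    have h1 := (hlam t htI).inner ℝ (key t ht)
    refine h1.congr_deriv ?_
    have hδXP : P θ t δθ = δX t := by
      rw [hδXdef, hPdef]; simp
    rw [hDdef]
    simp only [ContinuousLinearMap.coe_smul', Pi.smul_apply, ContinuousLinearMap.coe_comp',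
      Function.comp_apply, innerSL_apply_apply, hδXP, ContinuousLinearMap.neg_apply,
      ContinuousLinearMap.adjoint_inner_left, inner_add_left, inner_add_right,
      inner_neg_left, inner_smul_left, hpart2, smul_eq_mul, RCLike.star_def, map_ofNat,
      starRingEnd_apply, star_trivial, inner_sub_left, inner_sub_right]
    ring
  -- fundamental theorem of calculus
  have hφcont : ContinuousOn (fun s => (inner ℝ (lam s) (δX s) : ℝ)) (Set.Icc 0 T) :=
    hlamCont.inner hδXc.continuousOn
  have hint1 : IntervalIntegrable (fun s => (inner ℝ (lam s) (Bv s) : ℝ)) volume 0 T := by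
    apply ContinuousOn.intervalIntegrable
    rw [Set.uIcc_of_le h0T]
    exact hlamCont.inner hBvc.continuousOn
  have hint2 : IntervalIntegrable (fun s => D θ s δθ) volume 0 T :=
    (hDθt.clm_apply continuous_const).intervalIntegrable 0 T
  have hψint : IntervalIntegrable
      (fun s => (inner ℝ (lam s) (Bv s) : ℝ) + D θ s δθ) volume 0 T := hint1.add hint2
  have hFTC : (∫ s in (0:ℝ)..T, ((inner ℝ (lam s) (Bv s) : ℝ) + D θ s δθ))
      = (inner ℝ (lam T) (δX T) : ℝ) - (inner ℝ (lam 0) (δX 0) : ℝ) :=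
    intervalIntegral.integral_eq_sub_of_hasDeriv_right_of_le h0T hφcont
      (fun s hs => (hψ s hs).hasDerivWithinAt) hψint
  rw [hlamT, intervalIntegral.integral_add hint1 hint2] at hFTC
  rw [inner_zero_left, zero_sub] at hFTC
  -- initial condition
  have hδX0 : δX 0 = fderiv ℝ g θ δθ := by
    have hgX : (fun x => X x 0) = g := funext hinit
    have hPf : fderiv ℝ (fun x => X x 0) θ = P θ 0 := (hP θ 0).fderiv
    rw [← hgX, hPf, hδXdef, hPdef]
    simp
  have happly : (∫ s in (0:ℝ)..T, D θ s) δθ = ∫ s in (0:ℝ)..T, D θ s δθ :=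
    ContinuousLinearMap.intervalIntegral_apply (hDθt.intervalIntegrable 0 T) δθ
  rw [happly, ← hδX0]
  linarith [hFTC]
end

section
/- Suppose that for every θ the trajectory X^θ satisfies d/dt X^θ_t = F_θ(X^θ_t) on [0,T] with X^θ_0 = g(θ), that (θ,t) ↦ X^θ_t is twice continuously differentiable, and let λ : [0,T] → ℝⁿ be continuously differentiable and μ ∈ ℝⁿ. Then the θ-derivative of the Lagrangian θ ↦ L(X^θ, λ, μ, θ) in any direction δθ ∈ ℝᵖ equals ∫₀ᵀ ⟨ ∂_θ X^θ_t · δθ, 2(∂_X H(X^θ_t))*(H(X^θ_t) − Y_t) − d/dt λ_t − (∂_X F_θ(X^θ_t))* λ_t ⟩ dt − ∫₀ᵀ ⟨λ_t, (∂_θ F_θ(X^θ_t))·δθ⟩ dt + ⟨λ_T, ∂_θ X^θ_T · δθ⟩ + ⟨μ − λ_0, ∂_θ X^θ_0 · δθ⟩ − ⟨μ, (∂_θ g(θ))·δθ⟩. -/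
open Metric Set MeasureTheory intervalIntegral

set_option synthInstance.maxHeartbeats 1000000 in
theorem leibniz_aux {P E : Type*} [NormedAddCommGroup P] [NormedSpace ℝ P]
    [FiniteDimensional ℝ P] [NormedAddCommGroup E] [NormedSpace ℝ E] [CompleteSpace E]
    (f : P → ℝ → E) (f' : P → ℝ → P →L[ℝ] E) (a b : ℝ) (x₀ : P)
    (hd : ∀ x t, HasFDerivAt (fun y => f y t) (f' x t) x)
    (hc : Continuous fun q : P × ℝ => f q.1 q.2)
    (hc' : Continuous fun q : P × ℝ => f' q.1 q.2) :
    HasFDerivAt (fun x => ∫ t in a..b, f x t) (∫ t in a..b, f' x₀ t) x₀ := by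
  obtain ⟨C, hC⟩ := ((isCompact_closedBall x₀ 1).prod
    (isCompact_uIcc (a := a) (b := b))).exists_bound_of_continuousOn
      (hc'.continuousOn (s := closedBall x₀ 1 ×ˢ uIcc a b))
  apply intervalIntegral.hasFDerivAt_integral_of_dominated_of_fderiv_le
    (s := ball x₀ 1) (bound := fun _ => C) (ball_mem_nhds x₀ one_pos)
  · exact Filter.Eventually.of_forall fun x =>
      ((hc.comp (continuous_const.prodMk continuous_id)).aestronglyMeasurable).restrict
  · exact (hc.comp (continuous_const.prodMk continuous_id)).intervalIntegrable a b
  · exact ((hc'.comp (continuous_const.prodMk continuous_id)).aestronglyMeasurable).restrict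
  · refine Filter.Eventually.of_forall fun t ht x hx => hC (x, t) ?_
    exact ⟨ball_subset_closedBall hx, uIoc_subset_uIcc ht⟩
  · exact intervalIntegrable_const
  · exact Filter.Eventually.of_forall fun t _ x _ => hd x t


set_option maxHeartbeats 2000000 in
/-- Derivative of the Lagrangian along the constrained trajectory: under the forward
constraints, for continuously differentiable `λ` and any `μ`, the θ-derivative of
`θ ↦ L(X^θ, λ, μ, θ)` in direction `δθ` equals
`∫₀ᵀ ⟨∂_θX^θ_t δθ, 2(∂_X H)*(H(X^θ_t) - Y t) - d/dt λ t - (∂_X F_θ)* λ t⟩ dt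
 - ∫₀ᵀ ⟨λ t, (∂_θ F_θ(X^θ_t)) δθ⟩ dt + ⟨λ T, ∂_θX^θ_T δθ⟩ + ⟨μ - λ 0, ∂_θX^θ_0 δθ⟩
 - ⟨μ, (∂_θ g θ) δθ⟩`. -/
theorem lagrangian_derivative
    (p n k : ℕ) (T : ℝ) (hT : 0 < T)
    (X : EuclideanSpace ℝ (Fin p) → ℝ → EuclideanSpace ℝ (Fin n))
    (F : EuclideanSpace ℝ (Fin p) → EuclideanSpace ℝ (Fin n) → EuclideanSpace ℝ (Fin n))
    (g : EuclideanSpace ℝ (Fin p) → EuclideanSpace ℝ (Fin n))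
    (H : EuclideanSpace ℝ (Fin n) → EuclideanSpace ℝ (Fin k))
    (Y : ℝ → EuclideanSpace ℝ (Fin k))
    (hX : ContDiff ℝ 2 (fun q : EuclideanSpace ℝ (Fin p) × ℝ => X q.1 q.2))
    (hF : ContDiff ℝ 2
      (fun q : EuclideanSpace ℝ (Fin p) × EuclideanSpace ℝ (Fin n) => F q.1 q.2))
    (hg : ContDiff ℝ 1 g) (hH : ContDiff ℝ 1 H) (hY : Continuous Y)
    (hforward : ∀ θ, ∀ t ∈ Set.Icc (0 : ℝ) T,
      HasDerivAt (fun s => X θ s) (F θ (X θ t)) t)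
    (hinit : ∀ θ, X θ 0 = g θ)
    (lam : ℝ → EuclideanSpace ℝ (Fin n)) (hlam : ContDiff ℝ 1 lam)
    (μ : EuclideanSpace ℝ (Fin n))
    (θ : EuclideanSpace ℝ (Fin p)) :
    ∀ δθ : EuclideanSpace ℝ (Fin p),
      fderiv ℝ (fun θ' =>
        (∫ t in (0 : ℝ)..T, ‖Y t - H (X θ' t)‖ ^ 2)
          + (∫ t in (0 : ℝ)..T,
              (inner ℝ (lam t) (deriv (fun s => X θ' s) t - F θ' (X θ' t)) : ℝ))
          + (inner ℝ μ (X θ' 0 - g θ') : ℝ)) θ δθ =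
      (∫ t in (0 : ℝ)..T,
          (inner ℝ (fderiv ℝ (fun θ' => X θ' t) θ δθ)
            ((2 : ℝ) • (ContinuousLinearMap.adjoint (fderiv ℝ H (X θ t)))
                (H (X θ t) - Y t)
              - deriv lam t
              - (ContinuousLinearMap.adjoint (fderiv ℝ (F θ) (X θ t))) (lam t)) : ℝ))
        - (∫ t in (0 : ℝ)..T,
            (inner ℝ (lam t) (fderiv ℝ (fun θ' => F θ' (X θ t)) θ δθ) : ℝ))
        + (inner ℝ (lam T) (fderiv ℝ (fun θ' => X θ' T) θ δθ) : ℝ)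
        + (inner ℝ (μ - lam 0) (fderiv ℝ (fun θ' => X θ' 0) θ δθ) : ℝ)
        - (inner ℝ μ (fderiv ℝ g θ δθ) : ℝ) := by
  intro δθ
  have h12 : (1 : WithTop ℕ∞) ≤ 2 := by norm_num
  -- basic differentiability/continuity facts
  have hXd : Differentiable ℝ (fun q : EuclideanSpace ℝ (Fin p) × ℝ => X q.1 q.2) :=
    hX.differentiable (by norm_num)
  have hFd : Differentiable ℝ
      (fun q : EuclideanSpace ℝ (Fin p) × EuclideanSpace ℝ (Fin n) => F q.1 q.2) :=
    hF.differentiable (by norm_num)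
  set DX := fderiv ℝ (fun q : EuclideanSpace ℝ (Fin p) × ℝ => X q.1 q.2) with hDXdef
  set DF := fderiv ℝ
    (fun q : EuclideanSpace ℝ (Fin p) × EuclideanSpace ℝ (Fin n) => F q.1 q.2) with hDFdef
  have hDX1 : ContDiff ℝ 1 DX := hX.fderiv_right (m := 1) (by norm_num)
  have cDX : Continuous DX := hDX1.continuous
  have cDF : Continuous DF := (hF.fderiv_right (m := 1) (by norm_num)).continuous
  -- partial derivative in θ
  have hXpart : ∀ (θ' : EuclideanSpace ℝ (Fin p)) (t : ℝ),
      HasFDerivAt (fun θ'' => X θ'' t)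
        ((DX (θ', t)).comp (ContinuousLinearMap.inl ℝ _ ℝ)) θ' := fun θ' t =>
    by have h := ((hXd (θ', t)).hasFDerivAt).comp θ' (hasFDerivAt_prodMk_left (𝕜 := ℝ) θ' t); exact h
  set v : ℝ → EuclideanSpace ℝ (Fin n) := fun t => DX (θ, t) (δθ, 0) with hvdef
  have hveq : ∀ t, fderiv ℝ (fun θ' => X θ' t) θ δθ = v t := by
    intro t
    rw [(hXpart θ t).fderiv]
    rfl
  have cv : Continuous v :=
    ((cDX.comp (continuous_const.prodMk continuous_id)).clm_apply continuous_const)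
  have cXθ : Continuous (fun t => X θ t) :=
    hX.continuous.comp (continuous_const.prodMk continuous_id)
  -- time derivative
  have hXt : ∀ (θ' : EuclideanSpace ℝ (Fin p)) (t : ℝ),
      HasDerivAt (fun s => X θ' s) (DX (θ', t) (0, 1)) t := fun θ' t => by
    have := ((hXd (θ', t)).hasFDerivAt).comp_hasDerivAt t
      ((hasDerivAt_const t θ').prodMk (hasDerivAt_id t))
    exact this
  have hFt : ∀ (θ' : EuclideanSpace ℝ (Fin p)), ∀ t ∈ Set.Icc (0:ℝ) T,
      DX (θ', t) (0, 1) = F θ' (X θ' t) := fun θ' t ht =>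
    (hXt θ' t).unique (hforward θ' t ht)

  -- second derivative and sensitivity equation
  set D2 := fderiv ℝ DX with hD2def
  have hD2 : ∀ q, HasFDerivAt DX (D2 q) q := fun q =>
    ((hDX1.differentiable (by norm_num)) q).hasFDerivAt
  have hsymm : ∀ (q : EuclideanSpace ℝ (Fin p) × ℝ) (a b : EuclideanSpace ℝ (Fin p) × ℝ),
      D2 q a b = D2 q b a := fun q =>
    hX.contDiffAt.isSymmSndFDerivAt (by norm_num)
  have hvd : ∀ t : ℝ, HasDerivAt v (D2 (θ, t) (0, 1) (δθ, 0)) t := by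
    intro t
    have h1 := (ContinuousLinearMap.apply ℝ (EuclideanSpace ℝ (Fin n))
      ((δθ, (0:ℝ)))).hasFDerivAt.comp (θ, t) (hD2 (θ, t))
    have h2 := h1.comp_hasDerivAt t ((hasDerivAt_const t θ).prodMk (hasDerivAt_id t))
    exact h2
  have hθ2 : ∀ t : ℝ, HasFDerivAt (fun θ' => DX (θ', t) (0, 1))
      ((((ContinuousLinearMap.apply ℝ (EuclideanSpace ℝ (Fin n))
          (((0:EuclideanSpace ℝ (Fin p)), (1:ℝ)))).comp
        (D2 (θ, t))).comp (ContinuousLinearMap.inl ℝ _ ℝ))) θ := by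
    intro t
    have h1 := (ContinuousLinearMap.apply ℝ (EuclideanSpace ℝ (Fin n))
      (((0:EuclideanSpace ℝ (Fin p)), (1:ℝ)))).hasFDerivAt.comp (θ, t) (hD2 (θ, t))
    exact h1.comp θ (hasFDerivAt_prodMk_left (𝕜 := ℝ) θ t)
  have hFchain : ∀ t : ℝ, HasFDerivAt (fun θ' => F θ' (X θ' t))
      ((DF (θ, X θ t)).comp ((ContinuousLinearMap.id ℝ _).prod
        ((DX (θ, t)).comp (ContinuousLinearMap.inl ℝ _ ℝ)))) θ := fun t =>
    by have h := (hFd (θ, X θ t)).hasFDerivAt.comp θ ((hasFDerivAt_id θ).prodMk (hXpart θ t)); exact h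
  have hkey : ∀ t ∈ Set.Icc (0:ℝ) T, D2 (θ, t) (δθ, 0) (0, 1) = DF (θ, X θ t) (δθ, v t) := by
    intro t ht
    have hfun : (fun θ' => DX (θ', t) (0, 1)) = (fun θ' => F θ' (X θ' t)) :=
      funext fun θ' => hFt θ' t ht
    have h2 := hθ2 t
    rw [hfun] at h2
    have h3 := congrArg (fun (L : EuclideanSpace ℝ (Fin p) →L[ℝ] EuclideanSpace ℝ (Fin n)) =>
      L δθ) (h2.unique (hFchain t))
    simpa using h3
  have hvd' : ∀ t ∈ Set.Icc (0:ℝ) T, HasDerivAt v (DF (θ, X θ t) (δθ, v t)) t := by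
    intro t ht
    have h := hvd t
    rwa [hsymm (θ, t) (0,1) (δθ,0), hkey t ht] at h
  -- partial derivatives of F
  have hBeq : ∀ y, fderiv ℝ (F θ) y
      = (DF (θ, y)).comp (ContinuousLinearMap.inr ℝ _ _) := fun y =>
    ((hFd (θ, y)).hasFDerivAt.comp y (hasFDerivAt_prodMk_right (𝕜 := ℝ) θ y)).fderiv
  have hceq : ∀ z, fderiv ℝ (fun θ' => F θ' z) θ
      = (DF (θ, z)).comp (ContinuousLinearMap.inl ℝ _ _) := fun z =>
    by have h := ((hFd (θ, z)).hasFDerivAt.comp θ (hasFDerivAt_prodMk_left (𝕜 := ℝ) θ z)).fderiv; exact h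
  have hsplit : ∀ t, DF (θ, X θ t) (δθ, v t) =
      fderiv ℝ (fun θ' => F θ' (X θ t)) θ δθ + fderiv ℝ (F θ) (X θ t) (v t) := by
    intro t
    rw [hceq, hBeq]
    have h0 : ((δθ, v t) : EuclideanSpace ℝ (Fin p) × EuclideanSpace ℝ (Fin n))
        = (δθ, 0) + (0, v t) := by simp
    simp only [ContinuousLinearMap.comp_apply, ContinuousLinearMap.inl_apply,
      ContinuousLinearMap.inr_apply]
    rw [h0, map_add]
  -- continuity facts
  have cB : Continuous fun t => fderiv ℝ (F θ) (X θ t) := by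
    simp only [hBeq]
    exact (cDF.comp (continuous_const.prodMk cXθ)).clm_comp continuous_const
  have cc : Continuous fun t => fderiv ℝ (fun θ' => F θ' (X θ t)) θ δθ := by
    simp only [hceq]
    exact ((cDF.comp (continuous_const.prodMk cXθ)).clm_comp
      continuous_const).clm_apply continuous_const
  have hlamd : ∀ t, HasDerivAt lam (deriv lam t) t := fun t =>
    ((hlam.differentiable (by norm_num)) t).hasDerivAt
  have clam : Continuous lam := hlam.continuous
  have clam' : Continuous (deriv lam) := hlam.continuous_deriv le_rfl
  have hIcc : Set.uIcc (0:ℝ) T = Set.Icc 0 T := Set.uIcc_of_le hT.le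
  have cBadj : Continuous fun t =>
      (ContinuousLinearMap.adjoint (fderiv ℝ (F θ) (X θ t))) (lam t) :=
    ((ContinuousLinearMap.adjoint.continuous.comp cB).clm_apply clam)
  -- integration by parts
  have hibp : (∫ t in (0:ℝ)..T,
      ((inner ℝ (lam t) (DF (θ, X θ t) (δθ, v t)) : ℝ) + inner ℝ (deriv lam t) (v t)))
      = (inner ℝ (lam T) (v T) : ℝ) - inner ℝ (lam 0) (v 0) := by
    apply intervalIntegral.integral_eq_sub_of_hasDerivAt
    · intro t ht
      rw [hIcc] at ht
      exact (hlamd t).inner ℝ (hvd' t ht)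
    · apply Continuous.intervalIntegrable
      exact (clam.inner ((cDF.comp (continuous_const.prodMk cXθ)).clm_apply
        (continuous_const.prodMk cv))).add (clam'.inner cv)
  -- Leibniz rule for the misfit integral
  set f' : EuclideanSpace ℝ (Fin p) → ℝ → (EuclideanSpace ℝ (Fin p) →L[ℝ] ℝ) :=
    fun θ' t => (2:ℝ) • ((innerSL ℝ (H (X θ' t) - Y t)).comp
      ((fderiv ℝ H (X θ' t)).comp ((DX (θ', t)).comp (ContinuousLinearMap.inl ℝ _ ℝ))))
    with hf'def
  have hHd : ∀ y, HasFDerivAt H (fderiv ℝ H y) y := fun y =>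
    ((hH.differentiable (by norm_num)) y).hasFDerivAt
  have hd : ∀ (θ' : EuclideanSpace ℝ (Fin p)) (t : ℝ),
      HasFDerivAt (fun θ'' => ‖Y t - H (X θ'' t)‖ ^ 2) (f' θ' t) θ' := by
    intro θ' t
    have hG : HasFDerivAt (fun θ'' => Y t - H (X θ'' t))
        (-((fderiv ℝ H (X θ' t)).comp
          ((DX (θ', t)).comp (ContinuousLinearMap.inl ℝ _ ℝ)))) θ' :=
      ((hHd (X θ' t)).comp θ' (hXpart θ' t)).const_sub (Y t)
    have h2 := hG.inner ℝ hG
    have h3 : (fun θ'' => ‖Y t - H (X θ'' t)‖ ^ 2)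
        = fun θ'' => (inner ℝ (Y t - H (X θ'' t)) (Y t - H (X θ'' t)) : ℝ) := by
      funext θ''
      rw [real_inner_self_eq_norm_sq]
    rw [h3]
    refine h2.congr_fderiv (Eq.symm ?_)
    apply ContinuousLinearMap.ext
    intro w
    simp only [hf'def, ContinuousLinearMap.smul_apply, ContinuousLinearMap.comp_apply,
      innerSL_apply_apply, fderivInnerCLM_apply, ContinuousLinearMap.prod_apply,
      ContinuousLinearMap.neg_apply, inner_neg_right, inner_neg_left, inner_sub_left,
      smul_eq_mul, real_inner_comm]
    ring
  have hfcont : Continuous fun q : EuclideanSpace ℝ (Fin p) × ℝ =>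
      ‖Y q.2 - H (X q.1 q.2)‖ ^ 2 :=
    (((hY.comp continuous_snd).sub (hH.continuous.comp hX.continuous)).norm).pow 2
  have hf'cont : Continuous fun q : EuclideanSpace ℝ (Fin p) × ℝ => f' q.1 q.2 := by
    simp only [hf'def]
    apply Continuous.fun_const_smul
    apply Continuous.clm_comp
    · exact (innerSL ℝ).continuous.comp
        ((hH.continuous.comp hX.continuous).sub (hY.comp continuous_snd))
    · exact ((hH.continuous_fderiv (by norm_num)).comp hX.continuous).clm_comp
        (cDX.clm_comp continuous_const)
  have hJ : HasFDerivAt (fun θ' => ∫ t in (0:ℝ)..T, ‖Y t - H (X θ' t)‖ ^ 2)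
      (∫ t in (0:ℝ)..T, f' θ t) θ :=
    leibniz_aux _ f' 0 T θ (fun x t => hd x t) hfcont hf'cont
  have hf'int : IntervalIntegrable (f' θ) MeasureTheory.volume 0 T :=
    (hf'cont.comp (continuous_const.prodMk continuous_id)).intervalIntegrable 0 T
  -- reduce the LHS using the constraints
  have hLHSfun : (fun θ' =>
        (∫ t in (0 : ℝ)..T, ‖Y t - H (X θ' t)‖ ^ 2)
          + (∫ t in (0 : ℝ)..T,
              (inner ℝ (lam t) (deriv (fun s => X θ' s) t - F θ' (X θ' t)) : ℝ))
          + (inner ℝ μ (X θ' 0 - g θ') : ℝ))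
      = fun θ' => ∫ t in (0:ℝ)..T, ‖Y t - H (X θ' t)‖ ^ 2 := by
    funext θ'
    have h0 : Set.EqOn (fun t => (inner ℝ (lam t)
        (deriv (fun s => X θ' s) t - F θ' (X θ' t)) : ℝ)) (fun _ => (0:ℝ))
        (Set.uIcc (0:ℝ) T) := by
      intro t ht
      rw [hIcc] at ht
      simp [(hforward θ' t ht).deriv]
    rw [intervalIntegral.integral_congr h0, hinit θ']
    simp
  rw [hLHSfun, hJ.fderiv, ContinuousLinearMap.intervalIntegral_apply hf'int δθ]
  -- compute the applied derivative of the misfit integrand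
  have hf'apply : ∀ t : ℝ, f' θ t δθ = (inner ℝ (v t)
      ((2:ℝ) • (ContinuousLinearMap.adjoint (fderiv ℝ H (X θ t)))
        (H (X θ t) - Y t)) : ℝ) := by
    intro t
    rw [real_inner_smul_right, real_inner_comm, ContinuousLinearMap.adjoint_inner_left]
    simp only [hf'def, ContinuousLinearMap.smul_apply, ContinuousLinearMap.comp_apply,
      ContinuousLinearMap.inl_apply, innerSL_apply_apply, smul_eq_mul]
    rfl
  -- abbreviations for the remaining integrands
  simp only [hveq, hceq]
  simp only [hf'apply]
  have ca : Continuous fun t : ℝ => (2:ℝ) •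
      (ContinuousLinearMap.adjoint (fderiv ℝ H (X θ t))) (H (X θ t) - Y t) :=
    ((ContinuousLinearMap.adjoint.continuous.comp
      ((hH.continuous_fderiv (by norm_num)).comp cXθ)).clm_apply
      ((hH.continuous.comp cXθ).sub hY)).const_smul (2:ℝ)
  have ccθ : Continuous fun t : ℝ =>
      ((DF (θ, X θ t)).comp (ContinuousLinearMap.inl ℝ (EuclideanSpace ℝ (Fin p))
        (EuclideanSpace ℝ (Fin n)))) δθ :=
    ((cDF.comp (continuous_const.prodMk cXθ)).clm_comp
      continuous_const).clm_apply continuous_const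
  have hInt1 : IntervalIntegrable (fun t => (inner ℝ (v t) ((2:ℝ) •
      (ContinuousLinearMap.adjoint (fderiv ℝ H (X θ t))) (H (X θ t) - Y t)) : ℝ))
      MeasureTheory.volume 0 T := (cv.inner ca).intervalIntegrable 0 T
  have hInt2 : IntervalIntegrable (fun t => (inner ℝ (v t) (deriv lam t) : ℝ))
      MeasureTheory.volume 0 T := (cv.inner clam').intervalIntegrable 0 T
  have hInt3 : IntervalIntegrable (fun t => (inner ℝ (v t)
      ((ContinuousLinearMap.adjoint (fderiv ℝ (F θ) (X θ t))) (lam t)) : ℝ))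
      MeasureTheory.volume 0 T := (cv.inner cBadj).intervalIntegrable 0 T
  have hInt4 : IntervalIntegrable (fun t => (inner ℝ (lam t)
      (((DF (θ, X θ t)).comp (ContinuousLinearMap.inl ℝ (EuclideanSpace ℝ (Fin p))
        (EuclideanSpace ℝ (Fin n)))) δθ) : ℝ))
      MeasureTheory.volume 0 T := (clam.inner ccθ).intervalIntegrable 0 T
  have hsub : (∫ t in (0:ℝ)..T, (inner ℝ (v t) ((2:ℝ) •
        (ContinuousLinearMap.adjoint (fderiv ℝ H (X θ t))) (H (X θ t) - Y t)
        - deriv lam t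
        - (ContinuousLinearMap.adjoint (fderiv ℝ (F θ) (X θ t))) (lam t)) : ℝ))
      = (∫ t in (0:ℝ)..T, (inner ℝ (v t) ((2:ℝ) •
          (ContinuousLinearMap.adjoint (fderiv ℝ H (X θ t))) (H (X θ t) - Y t)) : ℝ))
        - (∫ t in (0:ℝ)..T, (inner ℝ (v t) (deriv lam t) : ℝ))
        - (∫ t in (0:ℝ)..T, (inner ℝ (v t)
            ((ContinuousLinearMap.adjoint (fderiv ℝ (F θ) (X θ t))) (lam t)) : ℝ)) := by
    rw [← intervalIntegral.integral_sub hInt1 hInt2,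
      ← intervalIntegral.integral_sub (hInt1.sub hInt2) hInt3]
    apply intervalIntegral.integral_congr
    intro t _
    simp [inner_sub_right]
  have hptwise : Set.EqOn (fun t => ((inner ℝ (lam t) (DF (θ, X θ t) (δθ, v t)) : ℝ)
        + inner ℝ (deriv lam t) (v t)))
      (fun t => (inner ℝ (lam t)
        (((DF (θ, X θ t)).comp (ContinuousLinearMap.inl ℝ (EuclideanSpace ℝ (Fin p))
          (EuclideanSpace ℝ (Fin n)))) δθ) : ℝ)
        + (inner ℝ (v t) ((ContinuousLinearMap.adjoint (fderiv ℝ (F θ) (X θ t))) (lam t)) : ℝ)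
        + (inner ℝ (v t) (deriv lam t) : ℝ)) (Set.uIcc (0:ℝ) T) := by
    intro t _
    have h6 : (inner ℝ (v t) ((ContinuousLinearMap.adjoint
        (fderiv ℝ (F θ) (X θ t))) (lam t)) : ℝ)
        = inner ℝ (lam t) ((fderiv ℝ (F θ) (X θ t)) (v t)) := by
      rw [real_inner_comm]
      exact ContinuousLinearMap.adjoint_inner_left _ _ _
    have h7 : (inner ℝ (lam t) (DF (θ, X θ t) (δθ, v t)) : ℝ)
        = inner ℝ (lam t) (((DF (θ, X θ t)).comp (ContinuousLinearMap.inl ℝ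
            (EuclideanSpace ℝ (Fin p)) (EuclideanSpace ℝ (Fin n)))) δθ)
          + inner ℝ (lam t) ((fderiv ℝ (F θ) (X θ t)) (v t)) := by
      rw [hsplit t, inner_add_right, hceq]
    have h8 : (inner ℝ (deriv lam t) (v t) : ℝ) = inner ℝ (v t) (deriv lam t) :=
      real_inner_comm _ _
    simp only []
    rw [h7, h8, h6]
  have hsum : (∫ t in (0:ℝ)..T, (inner ℝ (lam t)
        (((DF (θ, X θ t)).comp (ContinuousLinearMap.inl ℝ (EuclideanSpace ℝ (Fin p))
          (EuclideanSpace ℝ (Fin n)))) δθ) : ℝ))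
      + (∫ t in (0:ℝ)..T, (inner ℝ (v t)
          ((ContinuousLinearMap.adjoint (fderiv ℝ (F θ) (X θ t))) (lam t)) : ℝ))
      + (∫ t in (0:ℝ)..T, (inner ℝ (v t) (deriv lam t) : ℝ))
      = (inner ℝ (lam T) (v T) : ℝ) - inner ℝ (lam 0) (v 0) := by
    rw [← intervalIntegral.integral_add hInt4 hInt3,
      ← intervalIntegral.integral_add (hInt4.add hInt3) hInt2]
    rw [← intervalIntegral.integral_congr hptwise]
    exact hibp
  have hgX : (fun θ' => X θ' 0) = g := funext hinit
  have hv0 : (fderiv ℝ g θ) δθ = v 0 := by rw [← hgX]; exact hveq 0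
  rw [hsub, inner_sub_left, hv0]
  linarith [hsum]
end
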